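/- arXiv:1210.4963 — 7 statements merged into one kernel-verified Lean document; each statement's English description precedes it below -/
import Mathlib

section
/- Let x_1, …, x_n ∈ ℝ^p, y_1, …, y_n ∈ ℝ, let I ⊆ {1, …, n} with |I| ≥ p + 1, and suppose θ* ∈ ℝ^p is a global minimizer of ρ_I(θ) = max_{i ∈ I} |y_i − x_iᵀθ|. Then there exist a subset I* ⊆ I with 1 ≤ |I*| ≤ p + 1, signs ε_i ∈ {−1, 1} and reals λ_i > 0 for i ∈ I*, such that Σ_{i ∈ I*} λ_i ε_i x_i = 0, Σ_{i ∈ I*} λ_i = 1, and ε_i (y_i − x_iᵀθ*) = ρ_I(θ*) for every i ∈ I* (i.e. the constraints indexed by I* are active at θ*). -/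
open Finset Module

/-- Sign function used throughout: `σ r = 1` if `0 ≤ r`, else `-1`. -/
noncomputable def chebSign (r : ℝ) : ℝ := if 0 ≤ r then 1 else -1

lemma chebSign_pm (r : ℝ) : chebSign r = 1 ∨ chebSign r = -1 := by
  unfold chebSign; split <;> simp

lemma abs_chebSign (r : ℝ) : |chebSign r| = 1 := by
  rcases chebSign_pm r with h | h <;> simp [h]

lemma chebSign_mul_of_abs_eq {r ρ : ℝ} (h : |r| = ρ) : chebSign r * r = ρ := by
  unfold chebSign
  rcases abs_cases r with ⟨h1, h2⟩ | ⟨h1, h2⟩ <;> simp_all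

/-- Separation step: at a minimizer with positive optimal value `ρ`, the origin lies in the
convex hull of the signed active gradients. -/
lemma cheb_zero_mem_convexHull (n p : ℕ) (x : Fin n → Fin p → ℝ) (y : Fin n → ℝ)
    (I : Finset (Fin n)) (hI : I.Nonempty) (θs : Fin p → ℝ)
    (hmin : ∀ θ : Fin p → ℝ,
      I.sup' hI (fun i => |y i - ∑ j, x i j * θs j|) ≤
        I.sup' hI (fun i => |y i - ∑ j, x i j * θ j|))
    (hρpos : 0 < I.sup' hI (fun i => |y i - ∑ j, x i j * θs j|)) :
    (0 : Fin p → ℝ) ∈ convexHull ℝ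
      (((I.filter (fun i => |y i - ∑ j, x i j * θs j| =
          I.sup' hI (fun i => |y i - ∑ j, x i j * θs j|))).image
        (fun i => chebSign (y i - ∑ j, x i j * θs j) • x i) : Finset (Fin p → ℝ)) :
          Set (Fin p → ℝ)) := by
  classical
  set r : Fin n → ℝ := fun i => y i - ∑ j, x i j * θs j with hr
  set ρ : ℝ := I.sup' hI (fun i => |r i|) with hρ
  set A : Finset (Fin n) := I.filter (fun i => |r i| = ρ) with hA
  set T : Finset (Fin p → ℝ) := A.image (fun i => chebSign (r i) • x i) with hT
  by_contra h0T
  obtain ⟨f, u, hfu, hub⟩ := geometric_hahn_banach_point_closed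
    (convex_convexHull ℝ _) (T.finite_toSet.isClosed_convexHull (𝕜 := ℝ)) h0T
  rw [map_zero] at hfu
  have hfs : ∀ i ∈ A, u < chebSign (r i) * f (x i) := by
    intro i hi
    have : (chebSign (r i) • x i) ∈ convexHull ℝ ((T : Set (Fin p → ℝ))) :=
      subset_convexHull ℝ _ (by exact_mod_cast Finset.mem_image_of_mem _ hi)
    have := hub _ this
    rwa [map_smul, smul_eq_mul] at this
  -- the direction of descent
  set d : Fin p → ℝ := fun j => f (fun j' => if j = j' then 1 else 0) with hd
  have hfd : ∀ v : Fin p → ℝ, ∑ j, v j * d j = f v := by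
    intro v
    conv_rhs => rw [pi_eq_sum_univ v, map_sum]
    refine Finset.sum_congr rfl fun j _ => ?_
    rw [map_smul, smul_eq_mul]
  -- bound on the gradients
  set M : ℝ := 1 + I.sup' hI (fun i => |f (x i)|) with hM
  have hMpos : 0 < M := by
    have := hI.choose_spec
    have h1 : (0:ℝ) ≤ |f (x hI.choose)| := abs_nonneg _
    have h2 : |f (x hI.choose)| ≤ I.sup' hI (fun i => |f (x i)|) :=
      Finset.le_sup' (fun i => |f (x i)|) this
    simp only [hM]; linarith
  have hMlt : ∀ i ∈ I, |f (x i)| < M := by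
    intro i hi
    have := Finset.le_sup' (fun i => |f (x i)|) hi
    simp only [hM]; linarith
  -- step size
  set g : Fin n → ℝ := fun i => if |r i| = ρ then 1 else (ρ - |r i|) / M with hg
  have hgpos : ∀ i ∈ I, 0 < g i := by
    intro i hi
    simp only [hg]
    split
    · norm_num
    · have hle : |r i| ≤ ρ := Finset.le_sup' (fun i => |r i|) hi
      have : |r i| < ρ := lt_of_le_of_ne hle (by assumption)
      exact div_pos (by linarith) hMpos
  set t : ℝ := min (ρ / (2 * M)) (I.inf' hI g) with ht
  have htpos : 0 < t := by
    apply lt_min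
    · exact div_pos hρpos (by linarith)
    · exact (Finset.lt_inf'_iff hI).2 hgpos
  have htM : t * M ≤ ρ / 2 := by
    have h1 : t ≤ ρ / (2 * M) := min_le_left _ _
    have := mul_le_mul_of_nonneg_right h1 hMpos.le
    calc t * M ≤ ρ / (2 * M) * M := this
      _ = ρ / 2 := by field_simp
  have htg : ∀ i ∈ I, t ≤ g i := fun i hi =>
    le_trans (min_le_right _ _) (Finset.inf'_le g hi)
  -- the improved point
  set θ : Fin p → ℝ := fun j => θs j + t * d j with hθ
  have hres : ∀ i, y i - ∑ j, x i j * θ j = r i - t * f (x i) := by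
    intro i
    have : ∑ j, x i j * θ j = (∑ j, x i j * θs j) + t * f (x i) := by
      rw [← hfd (x i), Finset.mul_sum, ← Finset.sum_add_distrib]
      refine Finset.sum_congr rfl fun j _ => ?_
      simp only [hθ]; ring
    rw [this]; simp only [hr]; ring
  have hlt : ∀ i ∈ I, |y i - ∑ j, x i j * θ j| < ρ := by
    intro i hi
    rw [hres i]
    have hfb : t * |f (x i)| < t * M := mul_lt_mul_of_pos_left (hMlt i hi) htpos
    by_cases hact : |r i| = ρ
    · -- active constraint
      have hεr : chebSign (r i) * r i = ρ := chebSign_mul_of_abs_eq hact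
      have hεf : u < chebSign (r i) * f (x i) := hfs i (Finset.mem_filter.2 ⟨hi, hact⟩)
      have hu0 : 0 < u := hfu
      have key : |r i - t * f (x i)| = |ρ - t * (chebSign (r i) * f (x i))| := by
        have : chebSign (r i) * (r i - t * f (x i)) = ρ - t * (chebSign (r i) * f (x i)) := by
          rw [mul_sub, hεr]; ring
        calc |r i - t * f (x i)| = |chebSign (r i)| * |r i - t * f (x i)| := by
              rw [abs_chebSign]; ring
          _ = |chebSign (r i) * (r i - t * f (x i))| := (abs_mul _ _).symm
          _ = |ρ - t * (chebSign (r i) * f (x i))| := by rw [this]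
      rw [key]
      have h1 : 0 < t * (chebSign (r i) * f (x i)) :=
        mul_pos htpos (lt_trans hu0 hεf)
      have h2 : chebSign (r i) * f (x i) ≤ |f (x i)| := by
        calc chebSign (r i) * f (x i) ≤ |chebSign (r i) * f (x i)| := le_abs_self _
          _ = |f (x i)| := by rw [abs_mul, abs_chebSign, one_mul]
      have h3 : t * (chebSign (r i) * f (x i)) < ρ := by
        have h5 := mul_le_mul_of_nonneg_left h2 htpos.le
        nlinarith
      rw [abs_lt]; constructor <;> linarith
    · -- inactive constraint
      have hle : |r i| ≤ ρ := Finset.le_sup' (fun i => |r i|) hi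
      have hlt' : |r i| < ρ := lt_of_le_of_ne hle hact
      have htgi : t ≤ (ρ - |r i|) / M := by
        have := htg i hi
        simpa only [hg, if_neg hact] using this
      have h4 : t * M ≤ ρ - |r i| := by
        rw [← div_mul_cancel₀ (ρ - |r i|) (ne_of_gt hMpos)]
        exact mul_le_mul_of_nonneg_right htgi hMpos.le
      calc |r i - t * f (x i)| ≤ |r i| + |t * f (x i)| := abs_sub _ _
        _ = |r i| + t * |f (x i)| := by rw [abs_mul, abs_of_pos htpos]
        _ < |r i| + t * M := by linarith
        _ ≤ ρ := by linarith
  have hcon : I.sup' hI (fun i => |y i - ∑ j, x i j * θ j|) < ρ :=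
    (Finset.sup'_lt_iff hI).2 hlt
  exact absurd (hmin θ) (not_le.2 hcon)

/-- Necessary optimality condition for the Chebyshev problem: if `θ*` globally minimizes
`ρ_I(θ) = max_{i ∈ I} |y i − x iᵀ θ|` with `|I| ≥ p + 1`, then there are a subset
`I* ⊆ I` with `1 ≤ |I*| ≤ p + 1`, signs `ε i ∈ {−1, 1}` and reals `λ i > 0` for `i ∈ I*`
such that `Σ_{i ∈ I*} λ i ε i x i = 0`, `Σ_{i ∈ I*} λ i = 1`, and every index of `I*`
is active at `θ*`, i.e. `ε i (y i − x iᵀ θ*) = ρ_I(θ*)` for all `i ∈ I*`. -/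
theorem chebyshev_optimality_necessary (n p : ℕ) (x : Fin n → Fin p → ℝ) (y : Fin n → ℝ)
    (I : Finset (Fin n)) (hI : I.Nonempty) (hcard : p + 1 ≤ I.card) (θs : Fin p → ℝ)
    (hmin : ∀ θ : Fin p → ℝ,
      I.sup' hI (fun i => |y i - ∑ j, x i j * θs j|) ≤
        I.sup' hI (fun i => |y i - ∑ j, x i j * θ j|)) :
    ∃ Is : Finset (Fin n), Is ⊆ I ∧ 1 ≤ Is.card ∧ Is.card ≤ p + 1 ∧
      ∃ ε lam : Fin n → ℝ,
        (∀ i ∈ Is, ε i = 1 ∨ ε i = -1) ∧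
        (∀ i ∈ Is, 0 < lam i) ∧
        (∑ i ∈ Is, (lam i * ε i) • x i) = 0 ∧
        (∑ i ∈ Is, lam i) = 1 ∧
        (∀ i ∈ Is, ε i * (y i - ∑ j, x i j * θs j) =
          I.sup' hI (fun i => |y i - ∑ j, x i j * θs j|)) := by
  classical
  set r : Fin n → ℝ := fun i => y i - ∑ j, x i j * θs j with hr
  set ρ : ℝ := I.sup' hI (fun i => |r i|) with hρ
  have hρ0 : 0 ≤ ρ := le_trans (abs_nonneg _) (Finset.le_sup' (fun i => |r i|) hI.choose_spec)
  rcases eq_or_lt_of_le hρ0 with hρz | hρpos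
  · -- degenerate case: ρ = 0, all residuals vanish; use linear dependence
    have hzero : ∀ i ∈ I, r i = 0 := by
      intro i hi
      have := Finset.le_sup' (fun i => |r i|) hi
      rw [← hρ, ← hρz] at this
      exact abs_eq_zero.1 (le_antisymm this (abs_nonneg _))
    obtain ⟨S, hSsub, hScard⟩ := Finset.exists_subset_card_eq hcard
    have hdep : ¬ LinearIndependent ℝ (fun i : {i // i ∈ S} => x i) := by
      intro h
      have hle := h.fintype_card_le_finrank
      rw [Fintype.card_coe, hScard, Module.finrank_fintype_fun_eq_card, Fintype.card_fin] at hle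
      omega
    obtain ⟨gg, hgsum, k, hgk⟩ := Fintype.not_linearIndependent_iff.mp hdep
    set g' : Fin n → ℝ := fun i => if h : i ∈ S then gg ⟨i, h⟩ else 0 with hg'
    set Is : Finset (Fin n) := S.filter (fun i => g' i ≠ 0) with hIs
    have hkIs : (k : Fin n) ∈ Is := by
      simp only [hIs, Finset.mem_filter]
      refine ⟨k.2, ?_⟩
      simp only [hg', dif_pos k.2]
      simpa using hgk
    set c : ℝ := ∑ i ∈ Is, |g' i| with hc
    have hcpos : 0 < c := by
      refine Finset.sum_pos' (fun i _ => abs_nonneg _) ⟨k, hkIs, ?_⟩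
      have : g' k ≠ 0 := (Finset.mem_filter.1 hkIs).2
      exact abs_pos.2 this
    refine ⟨Is, le_trans (Finset.filter_subset _ _) hSsub, ?_, ?_,
      fun i => chebSign (g' i), fun i => |g' i| / c, ?_, ?_, ?_, ?_, ?_⟩
    · exact Finset.Nonempty.card_pos ⟨k, hkIs⟩
    · exact le_trans (Finset.card_le_card (Finset.filter_subset _ _)) (le_of_eq hScard)
    · exact fun i _ => chebSign_pm _
    · intro i hi
      have : g' i ≠ 0 := (Finset.mem_filter.1 hi).2
      positivity
    · have hconv : ∀ i ∈ Is, (|g' i| / c * chebSign (g' i)) • x i = (c⁻¹ * g' i) • x i := by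
        intro i _
        congr 1
        unfold chebSign
        split
        · rw [abs_of_nonneg (by assumption)]; ring
        · rw [abs_of_neg (by linarith [lt_of_not_ge (by assumption : ¬ 0 ≤ g' i)])]; ring
      rw [Finset.sum_congr rfl hconv]
      have : ∑ i ∈ Is, (c⁻¹ * g' i) • x i = c⁻¹ • ∑ i ∈ Is, g' i • x i := by
        rw [Finset.smul_sum]
        exact Finset.sum_congr rfl fun i _ => (smul_smul _ _ _).symm
      rw [this]
      have hS0 : ∑ i ∈ Is, g' i • x i = ∑ i ∈ S, g' i • x i := by
        refine Finset.sum_filter_of_ne fun i _ h => ?_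
        intro h0; exact h (by rw [h0, zero_smul])
      rw [hS0]
      have : ∑ i ∈ S, g' i • x i = 0 := by
        rw [← Finset.sum_coe_sort S (fun i => g' i • x i)]
        rw [← hgsum]
        exact Finset.sum_congr rfl fun i _ => by rw [hg']; simp [dif_pos i.2]
      rw [this, smul_zero]
    · rw [← Finset.sum_div, ← hc, div_self (ne_of_gt hcpos)]
    · intro i hi
      have hiI : i ∈ I := hSsub ((Finset.mem_filter.1 hi).1)
      have h0 : y i - ∑ j, x i j * θs j = 0 := hzero i hiI
      rw [h0, mul_zero]
      exact hρz
  · -- main case: ρ > 0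
    have h0T := cheb_zero_mem_convexHull n p x y I hI θs hmin (by rw [← hρ] at *; exact hρpos)
    rw [← hρ] at h0T
    obtain ⟨ι, hι, z, w, hzT, haff, hwpos, hwsum, hwz⟩ :=
      eq_pos_convex_span_of_mem_convexHull h0T
    -- cardinality bound
    have hcardι : Fintype.card ι ≤ p + 1 := by
      have h1 := haff.card_le_finrank_succ
      have h2 : finrank ℝ (vectorSpan ℝ (Set.range z)) ≤ p := by
        have := Submodule.finrank_le (vectorSpan ℝ (Set.range z))
        rwa [Module.finrank_fintype_fun_eq_card, Fintype.card_fin] at this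
      omega
    have hzinj : Function.Injective z := haff.injective
    have hch : ∀ k : ι, ∃ i, (i ∈ I ∧ |r i| = ρ) ∧ chebSign (r i) • x i = z k := by
      intro k
      have := hzT (Set.mem_range_self k)
      simp only [Finset.coe_image, Set.mem_image, Finset.mem_coe, Finset.mem_filter] at this
      obtain ⟨i, hi, hz⟩ := this
      exact ⟨i, hi, hz⟩
    choose φ hφA hφz using hch
    have hφinj : Function.Injective φ := by
      intro k k' hkk'
      apply hzinj
      rw [← hφz k, ← hφz k', hkk']
    have hnι : Nonempty ι := by
      rcases isEmpty_or_nonempty ι with h | h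
      · exfalso; rw [Finset.univ_eq_empty, Finset.sum_empty] at hwsum; norm_num at hwsum
      · exact h
    set Is : Finset (Fin n) := Finset.univ.image φ with hIs
    set lam : Fin n → ℝ := fun i => if h : ∃ k, φ k = i then w h.choose else 0 with hlam
    have hlamφ : ∀ k, lam (φ k) = w k := by
      intro k
      have hex : ∃ k', φ k' = φ k := ⟨k, rfl⟩
      simp only [hlam, dif_pos hex]
      congr 1
      exact hφinj hex.choose_spec
    refine ⟨Is, ?_, ?_, ?_, fun i => chebSign (r i), lam, ?_, ?_, ?_, ?_, ?_⟩
    · intro i hi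
      obtain ⟨k, _, rfl⟩ := Finset.mem_image.1 hi
      exact (hφA k).1
    · refine Finset.Nonempty.card_pos ⟨φ (Classical.arbitrary ι), ?_⟩
      exact Finset.mem_image.2 ⟨_, Finset.mem_univ _, rfl⟩
    · rw [hIs, Finset.card_image_of_injective _ hφinj, Finset.card_univ]
      exact hcardι
    · exact fun i _ => chebSign_pm _
    · intro i hi
      obtain ⟨k, _, rfl⟩ := Finset.mem_image.1 hi
      rw [hlamφ k]; exact hwpos k
    · rw [hIs, Finset.sum_image (fun a _ b _ h => hφinj h)]
      calc ∑ k : ι, (lam (φ k) * chebSign (r (φ k))) • x (φ k)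
          = ∑ k : ι, w k • z k := by
            refine Finset.sum_congr rfl fun k _ => ?_
            rw [hlamφ k, mul_smul, hφz k]
        _ = 0 := hwz
    · rw [hIs, Finset.sum_image (fun a _ b _ h => hφinj h)]
      calc ∑ k : ι, lam (φ k) = ∑ k : ι, w k := Finset.sum_congr rfl fun k _ => hlamφ k
        _ = 1 := hwsum
    · intro i hi
      obtain ⟨k, _, rfl⟩ := Finset.mem_image.1 hi
      have h0 : y (φ k) - ∑ j, x (φ k) j * θs j = r (φ k) := rfl
      rw [h0]
      exact chebSign_mul_of_abs_eq (hφA k).2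
end

section
/- Let x_1, …, x_n ∈ ℝ^p, y_1, …, y_n ∈ ℝ, fix 0 ≤ k ≤ n − (p + 1), and define f_k(θ) = min over all subsets I ⊆ {1, …, n} with |I| = n − k of ρ_I(θ), where ρ_I(θ) = max_{i ∈ I} |y_i − x_iᵀθ|. If θ* ∈ ℝ^p is a local minimizer of f_k, then there exists a subset I ⊆ {1, …, n} with |I| = n − k such that ρ_I(θ*) = f_k(θ*) and θ* is a global minimizer of ρ_I over ℝ^p. -/
/-- The Chebyshev (l∞) residual function `ρ_I(θ) = max_{i ∈ I} |y i − x iᵀ θ|`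
(defined as `0` for empty `I`). -/
noncomputable def rho (n p : ℕ) (x : Fin n → Fin p → ℝ) (y : Fin n → ℝ)
    (I : Finset (Fin n)) (θ : Fin p → ℝ) : ℝ :=
  if hI : I.Nonempty then I.sup' hI (fun i => |y i - ∑ j, x i j * θ j|) else 0

/-- `f_k(θ) = min_{I ⊆ {1,…,n}, |I| = n − k} ρ_I(θ)` (defined as `0` if no such `I`). -/
noncomputable def fk (n p : ℕ) (x : Fin n → Fin p → ℝ) (y : Fin n → ℝ) (k : ℕ)
    (θ : Fin p → ℝ) : ℝ :=
  if h : (Finset.powersetCard (n - k) (Finset.univ : Finset (Fin n))).Nonempty then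
    (Finset.powersetCard (n - k) (Finset.univ : Finset (Fin n))).inf' h
      (fun I => rho n p x y I θ)
  else 0

lemma rho_convexOn (n p : ℕ) (x : Fin n → Fin p → ℝ) (y : Fin n → ℝ)
    (I : Finset (Fin n)) (hI : I.Nonempty) :
    ConvexOn ℝ Set.univ (rho n p x y I) := by
  refine ⟨convex_univ, fun θ₁ _ θ₂ _ a b ha hb hab => ?_⟩
  simp only [rho, dif_pos hI]
  refine Finset.sup'_le _ _ fun i hi => ?_
  have key : y i - ∑ j, x i j * (a • θ₁ + b • θ₂) j
      = a * (y i - ∑ j, x i j * θ₁ j) + b * (y i - ∑ j, x i j * θ₂ j) := by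
    simp only [Pi.add_apply, Pi.smul_apply, smul_eq_mul]
    have : ∑ j, x i j * (a * θ₁ j + b * θ₂ j)
        = a * ∑ j, x i j * θ₁ j + b * ∑ j, x i j * θ₂ j := by
      rw [Finset.mul_sum, Finset.mul_sum, ← Finset.sum_add_distrib]
      exact Finset.sum_congr rfl fun j _ => by ring
    rw [this]
    linear_combination (-(y i)) * hab
  rw [key]
  calc |a * (y i - ∑ j, x i j * θ₁ j) + b * (y i - ∑ j, x i j * θ₂ j)|
      ≤ |a * (y i - ∑ j, x i j * θ₁ j)| + |b * (y i - ∑ j, x i j * θ₂ j)| := abs_add_le _ _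
    _ = a * |y i - ∑ j, x i j * θ₁ j| + b * |y i - ∑ j, x i j * θ₂ j| := by
        rw [abs_mul, abs_mul, abs_of_nonneg ha, abs_of_nonneg hb]
    _ ≤ a * I.sup' hI (fun i => |y i - ∑ j, x i j * θ₁ j|)
        + b * I.sup' hI (fun i => |y i - ∑ j, x i j * θ₂ j|) := by
        gcongr
        · exact Finset.le_sup' (fun i => |y i - ∑ j, x i j * θ₁ j|) hi
        · exact Finset.le_sup' (fun i => |y i - ∑ j, x i j * θ₂ j|) hi

/-- If `θ*` is a local minimizer of `f_k`, then there is a subset `I` of size `n − k`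
with `ρ_I(θ*) = f_k(θ*)` such that `θ*` is a global minimizer of `ρ_I`. -/
theorem localMin_fk_is_globalMin_rho (n p k : ℕ) (hpn : p + 1 ≤ n) (hk : k ≤ n - (p + 1))
    (x : Fin n → Fin p → ℝ) (y : Fin n → ℝ) (θs : Fin p → ℝ)
    (hloc : IsLocalMin (fk n p x y k) θs) :
    ∃ I : Finset (Fin n), I.card = n - k ∧
      rho n p x y I θs = fk n p x y k θs ∧
      ∀ θ : Fin p → ℝ, rho n p x y I θs ≤ rho n p x y I θ := by
  have hcard : n - k ≤ n := Nat.sub_le _ _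
  have hpos : 1 ≤ n - k := by omega
  have hne : (Finset.powersetCard (n - k) (Finset.univ : Finset (Fin n))).Nonempty := by
    rw [Finset.powersetCard_nonempty]
    simp
  obtain ⟨I, hImem, hIeq⟩ :=
    Finset.exists_mem_eq_inf' hne (fun I => rho n p x y I θs)
  rw [Finset.mem_powersetCard] at hImem
  have hIcard : I.card = n - k := hImem.2
  have hInonempty : I.Nonempty := Finset.card_pos.mp (by omega)
  have hrho_eq : rho n p x y I θs = fk n p x y k θs := by
    rw [fk, dif_pos hne]; exact hIeq.symm
  refine ⟨I, hIcard, hrho_eq, ?_⟩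
  -- θs is a local min of rho I
  have hlocI : IsLocalMin (rho n p x y I) θs := by
    refine hloc.mono fun θ hθ => ?_
    have h1 : fk n p x y k θ ≤ rho n p x y I θ := by
      rw [fk, dif_pos hne]
      exact Finset.inf'_le _ (Finset.mem_powersetCard.mpr hImem)
    calc rho n p x y I θs = fk n p x y k θs := hrho_eq
      _ ≤ fk n p x y k θ := hθ
      _ ≤ rho n p x y I θ := h1
  have := IsMinOn.of_isLocalMin_of_convex_univ hlocI (rho_convexOn n p x y I hInonempty)
  exact this
end

section
/- Let n ≥ p + 1, let x_1, …, x_n ∈ ℝ^p satisfy the Haar condition (every p of the vectors x_1, …, x_n are linearly independent), and let y_1, …, y_n ∈ ℝ. Then the Chebyshev problem min_{θ ∈ ℝ^p} max_{1 ≤ i ≤ n} |y_i − x_iᵀθ| has a unique solution; i.e., the function f_0(θ) = max_{1 ≤ i ≤ n} |y_i − x_iᵀθ| has exactly one global minimizer, and hence exactly one local minimizer (M_0 = 1). -/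
namespace ChebyshevAux

open Finset

/-- Linear combination algebra helper. -/
lemma sum_lin {p : ℕ} (w a b : Fin p → ℝ) (t : ℝ) :
    ∑ j, w j * (a j + t * b j) = ∑ j, w j * a j + t * ∑ j, w j * b j := by
  rw [Finset.mul_sum, ← Finset.sum_add_distrib]
  exact Finset.sum_congr rfl fun j _ => by ring

lemma sum_smul₂ {p : ℕ} (w a b : Fin p → ℝ) (s t : ℝ) :
    ∑ j, w j * (s * a j + t * b j) = s * ∑ j, w j * a j + t * ∑ j, w j * b j := by
  rw [Finset.mul_sum, Finset.mul_sum, ← Finset.sum_add_distrib]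
  exact Finset.sum_congr rfl fun j _ => by ring

lemma sum_sub' {p : ℕ} (w a b : Fin p → ℝ) :
    ∑ j, w j * (a j - b j) = ∑ j, w j * a j - ∑ j, w j * b j := by
  rw [← Finset.sum_sub_distrib]
  exact Finset.sum_congr rfl fun j _ => by ring

/-- If `v` is annihilated by a linearly independent family of `p` functionals in `ℝ^p`,
then `v = 0`. -/
lemma eq_zero_of_dot {n p : ℕ} (x : Fin n → Fin p → ℝ) {s : Finset (Fin n)}
    (hs : s.card = p) (hli : LinearIndependent ℝ (fun i : s => x i))
    (v : Fin p → ℝ) (hv : ∀ i ∈ s, ∑ j, x i j * v j = 0) : v = 0 := by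
  have hspan : Submodule.span ℝ (Set.range (fun i : s => x i)) = ⊤ :=
    hli.span_eq_top_of_card_eq_finrank' (by simp [hs, Module.finrank_pi])
  -- the functional `w ↦ ∑ j, w j * v j`
  let φ : (Fin p → ℝ) →ₗ[ℝ] ℝ :=
    { toFun := fun w => ∑ j, w j * v j
      map_add' := fun a b => by
        rw [← Finset.sum_add_distrib]; exact Finset.sum_congr rfl fun j _ => by
          simp [add_mul]
      map_smul' := fun c a => by
        simp only [RingHom.id_apply, Pi.smul_apply, smul_eq_mul, Finset.mul_sum]
        exact Finset.sum_congr rfl fun j _ => by ring }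
  have hker : Submodule.span ℝ (Set.range (fun i : s => x i)) ≤ LinearMap.ker φ := by
    rw [Submodule.span_le]
    rintro w ⟨i, rfl⟩
    exact hv i i.2
  have hφv : φ v = 0 := by
    have : v ∈ LinearMap.ker φ := hker (hspan ▸ Submodule.mem_top)
    exact this
  have hsum : ∑ j, v j * v j = 0 := hφv
  funext j
  have := (Finset.sum_eq_zero_iff_of_nonneg (fun j _ => mul_self_nonneg (v j))).1 hsum j
    (Finset.mem_univ j)
  have := mul_self_eq_zero.1 this
  simpa using this

/-- The linear map `θ ↦ (⟨x i, θ⟩)_{i ∈ s}`. -/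
noncomputable def Tmap {n p : ℕ} (x : Fin n → Fin p → ℝ) (s : Finset (Fin n)) :
    (Fin p → ℝ) →ₗ[ℝ] (s → ℝ) where
  toFun θ := fun i => ∑ j, x i j * θ j
  map_add' a b := by
    funext i
    simp only [Pi.add_apply, mul_add, Finset.sum_add_distrib]
  map_smul' c a := by
    funext i
    simp only [Pi.smul_apply, smul_eq_mul, RingHom.id_apply, Finset.mul_sum]
    exact Finset.sum_congr rfl fun j _ => by ring

lemma Tmap_injective {n p : ℕ} (x : Fin n → Fin p → ℝ) {s : Finset (Fin n)}
    (hs : s.card = p) (hli : LinearIndependent ℝ (fun i : s => x i)) :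
    Function.Injective (Tmap x s) := by
  rw [← LinearMap.ker_eq_bot, LinearMap.ker_eq_bot']
  intro v hv
  refine eq_zero_of_dot x hs hli v fun i hi => ?_
  exact congrFun hv ⟨i, hi⟩

lemma Tmap_surjective {n p : ℕ} (x : Fin n → Fin p → ℝ) {s : Finset (Fin n)}
    (hs : s.card = p) (hli : LinearIndependent ℝ (fun i : s => x i)) :
    Function.Surjective (Tmap x s) := by
  have hfr : Module.finrank ℝ (Fin p → ℝ) = Module.finrank ℝ (s → ℝ) := by
    simp [Module.finrank_pi, hs]
  exact (LinearMap.injective_iff_surjective_of_finrank_eq_finrank hfr).1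
    (Tmap_injective x hs hli)

/-- Midpoint equality: `|a| ≤ m`, `|b| ≤ m`, `|(a+b)/2| = m` imply `a = b`. -/
lemma mid_eq {a b m : ℝ} (ha : |a| ≤ m) (hb : |b| ≤ m) (hab : |(a + b) / 2| = m) :
    a = b := by
  have hm : 0 ≤ m := hab ▸ abs_nonneg _
  rcases abs_eq hm |>.1 hab with h | h
  · have ha' := abs_le.1 ha
    have hb' := abs_le.1 hb
    have : a + b = 2 * m := by linarith
    linarith [ha'.2, hb'.2]
  · have ha' := abs_le.1 ha
    have hb' := abs_le.1 hb
    have : a + b = -(2 * m) := by linarith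
    linarith [ha'.1, hb'.1]

end ChebyshevAux

open ChebyshevAux Finset

/-- Under the Haar condition (every `p` of the vectors `x 1, …, x n` are linearly
independent) and `n ≥ p + 1`, the Chebyshev problem `min_θ max_i |y i − x iᵀ θ|` has a
unique solution; i.e. `f_0(θ) = max_{1 ≤ i ≤ n} |y i − x iᵀ θ|` has exactly one global
minimizer, and exactly one local minimizer. -/
theorem chebyshev_unique_solution (n p : ℕ) (hn : p + 1 ≤ n)
    (x : Fin n → Fin p → ℝ) (y : Fin n → ℝ)
    (haar : ∀ s : Finset (Fin n), s.card = p →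
      LinearIndependent ℝ (fun i : s => x i)) :
    (∃! θs : Fin p → ℝ, ∀ θ : Fin p → ℝ,
        rho n p x y Finset.univ θs ≤ rho n p x y Finset.univ θ) ∧
      (∃! θs : Fin p → ℝ, IsLocalMin (rho n p x y Finset.univ) θs) := by
  haveI : NeZero n := ⟨by omega⟩
  have hne : (Finset.univ : Finset (Fin n)).Nonempty := Finset.univ_nonempty
  set r : Fin n → (Fin p → ℝ) → ℝ := fun i θ => y i - ∑ j, x i j * θ j with hr
  set f : (Fin p → ℝ) → ℝ := rho n p x y Finset.univ with hf
  have hfd : ∀ θ, f θ = Finset.univ.sup' hne (fun i => |r i θ|) := by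
    intro θ; simp only [hf, rho, dif_pos hne, hr]
  have hle_f : ∀ θ i, |r i θ| ≤ f θ := fun θ i => by
    rw [hfd]; exact Finset.le_sup' (fun i => |r i θ|) (mem_univ i)
  have i0 : Fin n := ⟨0, by omega⟩
  have hf_nonneg : ∀ θ, 0 ≤ f θ := fun θ => le_trans (abs_nonneg (r i0 θ)) (hle_f θ i0)
  have hf_le : ∀ θ c, (∀ i, |r i θ| ≤ c) → f θ ≤ c := by
    intro θ c hc
    rw [hfd]; exact Finset.sup'_le _ _ fun i _ => hc i
  -- continuity
  have hf_cont : Continuous f := by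
    have : Continuous fun θ => Finset.univ.sup' hne (fun i => |r i θ|) := by
      apply continuous_iff_continuousAt.2
      intro θ
      apply ContinuousAt.finset_sup'_apply hne
      intro i _
      apply ContinuousAt.abs
      apply ContinuousAt.sub continuousAt_const
      exact (continuous_finset_sum _ fun j _ =>
        (continuous_const.mul (continuous_apply j))).continuousAt
    have hfe : f = fun θ => Finset.univ.sup' hne (fun i => |r i θ|) := funext hfd
    rw [hfe]; exact this
  -- convexity
  have hf_convex : ConvexOn ℝ Set.univ f := by
    refine ⟨convex_univ, fun θ1 _ θ2 _ a b ha hb hab => ?_⟩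
    apply hf_le
    intro i
    have hcomb : r i (a • θ1 + b • θ2) = a * r i θ1 + b * r i θ2 := by
      simp only [hr]
      have : ∑ j, x i j * (a • θ1 + b • θ2) j =
          a * ∑ j, x i j * θ1 j + b * ∑ j, x i j * θ2 j := by
        simpa using sum_smul₂ (fun j => x i j) θ1 θ2 a b
      rw [this]
      have : a * y i + b * y i = y i := by rw [← add_mul, hab, one_mul]
      nlinarith [this]
    rw [hcomb]
    calc |a * r i θ1 + b * r i θ2| ≤ |a * r i θ1| + |b * r i θ2| := abs_add_le _ _
      _ = a * |r i θ1| + b * |r i θ2| := by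
          rw [abs_mul, abs_mul, abs_of_nonneg ha, abs_of_nonneg hb]
      _ ≤ a * f θ1 + b * f θ2 := by
          gcongr <;> [exact hle_f θ1 i; exact hle_f θ2 i]
  -- existence of a global minimizer via coercivity
  obtain ⟨s₀, hs₀u, hs₀⟩ := Finset.exists_subset_card_eq
    (show p ≤ (univ : Finset (Fin n)).card by
      rw [Finset.card_univ, Fintype.card_fin]; omega)
  have hli₀ := haar s₀ hs₀
  -- antilipschitz bound
  obtain ⟨K, hK⟩ : ∃ K : ℝ, 0 ≤ K ∧ ∀ θ : Fin p → ℝ, ‖θ‖ ≤ K * ‖Tmap x s₀ θ‖ := by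
    have hbij : Function.Bijective (Tmap x s₀) :=
      ⟨Tmap_injective x hs₀ hli₀, Tmap_surjective x hs₀ hli₀⟩
    let e : (Fin p → ℝ) ≃ₗ[ℝ] (s₀ → ℝ) := LinearEquiv.ofBijective _ hbij
    have halip := e.toContinuousLinearEquiv.antilipschitz
    obtain ⟨c, hc⟩ : ∃ c : NNReal, AntilipschitzWith c (Tmap x s₀) := ⟨_, halip⟩
    refine ⟨c, c.2, fun θ => ?_⟩
    have := hc.le_mul_dist θ 0
    simpa [dist_eq_norm, map_zero] using this
  obtain ⟨hK0, hKb⟩ := hK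
  have hTnorm : ∀ θ, ‖Tmap x s₀ θ‖ ≤ f θ + f 0 := by
    intro θ
    have h0 : 0 ≤ f θ + f 0 := add_nonneg (hf_nonneg θ) (hf_nonneg 0)
    apply pi_norm_le_iff_of_nonneg h0 |>.2
    intro i
    have h1 : |y (i : Fin n) - ∑ j, x i j * θ j| ≤ f θ := hle_f θ i
    have h2 : |y (i : Fin n)| ≤ f 0 := by
      have := hle_f 0 i
      simpa [hr] using this
    have : |(∑ j, x (i : Fin n) j * θ j)| ≤ f θ + f 0 := by
      have : (∑ j, x (i : Fin n) j * θ j) = y i - (y i - ∑ j, x i j * θ j) := by ring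
      rw [this]
      calc |y (i : Fin n) - (y i - ∑ j, x i j * θ j)|
          ≤ |y (i : Fin n)| + |y i - ∑ j, x i j * θ j| := abs_sub _ _
        _ ≤ f 0 + f θ := add_le_add h2 h1
        _ = f θ + f 0 := by ring
    simpa [Tmap, Real.norm_eq_abs] using this
  -- sublevel set is bounded; minimize on a closed ball
  set R : ℝ := K * (2 * f 0) with hR
  have hball : ∀ θ, f θ ≤ f 0 → ‖θ‖ ≤ R := by
    intro θ hθ
    calc ‖θ‖ ≤ K * ‖Tmap x s₀ θ‖ := hKb θ
      _ ≤ K * (f θ + f 0) := by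
          apply mul_le_mul_of_nonneg_left _ hK0
          exact hTnorm θ
      _ ≤ K * (2 * f 0) := by
          apply mul_le_mul_of_nonneg_left _ hK0
          linarith
  have hR0 : 0 ≤ R := by
    have := hball 0 le_rfl
    exact le_trans (norm_nonneg _) this
  obtain ⟨θs, hθsmem, hθsmin⟩ : ∃ θ ∈ Metric.closedBall (0 : Fin p → ℝ) R,
      ∀ θ' ∈ Metric.closedBall (0 : Fin p → ℝ) R, f θ ≤ f θ' := by
    have hcpt : IsCompact (Metric.closedBall (0 : Fin p → ℝ) R) :=
      isCompact_closedBall _ _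
    have hnemp : (Metric.closedBall (0 : Fin p → ℝ) R).Nonempty :=
      ⟨0, by simp [hR0]⟩
    obtain ⟨θ, hθmem, hθ⟩ := hcpt.exists_isMinOn hnemp hf_cont.continuousOn
    exact ⟨θ, hθmem, fun θ' hθ' => hθ hθ'⟩
  have hglobal : ∀ θ, f θs ≤ f θ := by
    intro θ
    by_cases hθ : θ ∈ Metric.closedBall (0 : Fin p → ℝ) R
    · exact hθsmin θ hθ
    · have h0mem : (0 : Fin p → ℝ) ∈ Metric.closedBall (0 : Fin p → ℝ) R := by simp [hR0]
      have hf0 : f θs ≤ f 0 := hθsmin 0 h0mem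
      by_contra hcon
      push_neg at hcon
      have : f θ ≤ f 0 := le_trans hcon.le hf0
      have := hball θ this
      exact hθ (by simpa [Metric.mem_closedBall, dist_eq_norm] using this)
  -- uniqueness of the global minimizer
  have huniq : ∀ θ1 θ2 : Fin p → ℝ, (∀ θ, f θ1 ≤ f θ) → (∀ θ, f θ2 ≤ f θ) → θ1 = θ2 := by
    intro θ1 θ2 h1 h2
    set m : ℝ := f θ1 with hm
    have hm2 : f θ2 = m := le_antisymm (h2 θ1) (h1 θ2)
    have hm0 : 0 ≤ m := hf_nonneg θ1
    -- the midpoint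
    set θM : Fin p → ℝ := fun j => (θ1 j + θ2 j) / 2 with hθM
    have hrmid : ∀ i, r i θM = (r i θ1 + r i θ2) / 2 := by
      intro i
      simp only [hr, hθM]
      have h1 : ∑ j, x i j * ((θ1 j + θ2 j) / 2) =
          ∑ j, (x i j * θ1 j / 2 + x i j * θ2 j / 2) :=
        Finset.sum_congr rfl fun j _ => by ring
      rw [h1, Finset.sum_add_distrib, ← Finset.sum_div, ← Finset.sum_div]
      ring
    have hfM : f θM = m := by
      refine le_antisymm ?_ (h1 θM)
      apply hf_le
      intro i
      rw [hrmid i]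
      calc |(r i θ1 + r i θ2) / 2| ≤ (|r i θ1| + |r i θ2|) / 2 := by
            rw [abs_div, abs_two]
            gcongr
            exact abs_add_le _ _
        _ ≤ (m + m) / 2 := by
            gcongr
            · exact hle_f θ1 i
            · exact hm2 ▸ hle_f θ2 i
        _ = m := by ring
    -- the key lemma to finish: enough active constraints force θ1 = θ2
    have finish : ∀ s : Finset (Fin n), s.card = p →
        (∀ i ∈ s, r i θ1 = r i θ2) → θ1 = θ2 := by
      intro s hs heq
      have hv : ∀ i ∈ s, ∑ j, x i j * (θ1 j - θ2 j) = 0 := by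
        intro i hi
        have := heq i hi
        have hsub : ∑ j, x i j * (θ1 j - θ2 j) =
            ∑ j, x i j * θ1 j - ∑ j, x i j * θ2 j := sum_sub' _ _ _
        simp only [hr] at this
        rw [hsub]; linarith
      have := eq_zero_of_dot x hs (haar s hs) (fun j => θ1 j - θ2 j) hv
      funext j
      have := congrFun this j
      simpa [sub_eq_zero] using this
    by_cases hmz : m = 0
    · -- all residuals vanish
      refine finish s₀ hs₀ fun i _ => ?_
      have h1i : |r i θ1| ≤ 0 := hmz ▸ hle_f θ1 i
      have h2i : |r i θ2| ≤ 0 := by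
        have := hle_f θ2 i; rw [hm2, hmz] at this; exact this
      have e1 : r i θ1 = 0 := abs_nonpos_iff.1 h1i
      have e2 : r i θ2 = 0 := abs_nonpos_iff.1 h2i
      rw [e1, e2]
    · have hmpos : 0 < m := lt_of_le_of_ne hm0 (Ne.symm hmz)
      -- active set at the midpoint
      set E : Finset (Fin n) := univ.filter (fun i => |r i θM| = m) with hE
      have hEcard : p ≤ E.card := by
        by_contra hcon
        push_neg at hcon
        -- extend E to a set s of cardinality p
        obtain ⟨s, hEs, hsu, hscard⟩ := Finset.exists_subsuperset_card_eq
          (Finset.subset_univ E) hcon.le (by simp [Finset.card_univ]; omega)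
        -- choose a correction direction d
        obtain ⟨d, hd⟩ : ∃ d : Fin p → ℝ, ∀ i ∈ s, ∑ j, x i j * d j = r i θM := by
          obtain ⟨d, hd⟩ := Tmap_surjective x hscard (haar s hscard)
            (fun i : s => r i θM)
          exact ⟨d, fun i hi => congrFun hd ⟨i, hi⟩⟩
        -- the complement of E is nonempty
        have hEc : (univ \ E).Nonempty := by
          rw [Finset.sdiff_nonempty]
          intro hsub
          have : E = univ := Finset.eq_univ_of_forall fun i => hsub (mem_univ i)
          rw [this, Finset.card_univ] at hcon
          simp at hcon; omega
        set δ : ℝ := (univ \ E).inf' hEc (fun i => m - |r i θM|) with hδdef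
        have hδpos : 0 < δ := by
          rw [hδdef, Finset.lt_inf'_iff]
          intro i hi
          rw [Finset.mem_sdiff, hE, Finset.mem_filter] at hi
          have hlt : |r i θM| < m := lt_of_le_of_ne (hfM ▸ hle_f θM i)
            (by intro h; exact hi.2 ⟨mem_univ i, h⟩)
          linarith
        have hδle : ∀ i ∈ univ \ E, δ ≤ m - |r i θM| := by
          intro i hi; exact Finset.inf'_le _ hi
        set B : ℝ := univ.sup' hne (fun i => |∑ j, x i j * d j|) with hB
        have hBle : ∀ i, |∑ j, x i j * d j| ≤ B := fun i => by
          rw [hB]; exact Finset.le_sup' (fun i => |∑ j, x i j * d j|) (mem_univ i)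
        have hB0 : 0 ≤ B := le_trans (abs_nonneg _) (hBle i0)
        set t : ℝ := min (1/2 : ℝ) (δ / (B + 1)) with ht
        have ht0 : 0 < t := lt_min (by norm_num) (div_pos hδpos (by linarith))
        have ht12 : t ≤ 1/2 := min_le_left _ _
        have htB : t * B < δ := by
          have h1 : t ≤ δ / (B + 1) := min_le_right _ _
          have h2 : t * B ≤ (δ / (B + 1)) * B := by
            apply mul_le_mul_of_nonneg_right h1 hB0
          have h3 : (δ / (B + 1)) * B < δ := by
            rw [div_mul_eq_mul_div, div_lt_iff₀ (by linarith)]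
            nlinarith
          linarith
        set θt : Fin p → ℝ := fun j => θM j + t * d j with hθt
        have hrt : ∀ i, r i θt = r i θM - t * ∑ j, x i j * d j := by
          intro i
          simp only [hr, hθt]
          rw [sum_lin]
          ring
        have hflt : f θt < m := by
          rw [hfd]
          apply Finset.sup'_lt_iff hne |>.2
          intro i _
          by_cases hiE : i ∈ E
          · have hie : r i θM = ∑ j, x i j * d j := (hd i (hEs hiE)).symm
            have habs : |r i θM| = m := by
              have h := hiE; rw [hE] at h; exact (Finset.mem_filter.1 h).2
            rw [hrt i, ← hie]
            have : r i θM - t * r i θM = (1 - t) * r i θM := by ring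
            rw [this, abs_mul, abs_of_nonneg (by linarith : (0:ℝ) ≤ 1 - t), habs]
            nlinarith
          · have hi' : i ∈ univ \ E := Finset.mem_sdiff.2 ⟨mem_univ i, hiE⟩
            have h1 : δ ≤ m - |r i θM| := hδle i hi'
            rw [hrt i]
            calc |r i θM - t * ∑ j, x i j * d j|
                ≤ |r i θM| + |t * ∑ j, x i j * d j| := abs_sub _ _
              _ = |r i θM| + t * |∑ j, x i j * d j| := by
                  rw [abs_mul, abs_of_nonneg ht0.le]
              _ ≤ (m - δ) + t * B := by
                  gcongr
                  · linarith
                  · exact hBle i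
              _ < m := by linarith
        exact absurd (h1 θt) (not_le.2 hflt)
      -- pick p active indices; residuals of θ1 and θ2 agree there
      obtain ⟨s, hsE, hscard⟩ := Finset.exists_subset_card_eq hEcard
      refine finish s hscard fun i hi => ?_
      have hiE : i ∈ E := hsE hi
      have habs : |r i θM| = m := by
        have h := hiE; rw [hE] at h; exact (Finset.mem_filter.1 h).2
      have h1i : |r i θ1| ≤ m := hle_f θ1 i
      have h2i : |r i θ2| ≤ m := hm2 ▸ hle_f θ2 i
      have := hrmid i
      exact mid_eq h1i h2i (by rw [← this]; exact habs)
  -- assemble the two `∃!` statements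
  constructor
  · exact ⟨θs, hglobal, fun θ' h' => huniq θ' θs h' hglobal⟩
  · refine ⟨θs, ?_, ?_⟩
    · exact Filter.Eventually.of_forall hglobal
    · intro θ' h'
      have hmin : ∀ θ, f θ' ≤ f θ :=
        IsMinOn.of_isLocalMin_of_convex_univ h' hf_convex
      exact huniq θ' θs hmin hglobal
end

section
/- Let n ≥ p + 1, let x_1, …, x_n ∈ ℝ^p satisfy the Haar condition (every p of the vectors x_1, …, x_n are linearly independent), and let y_1, …, y_n ∈ ℝ. Then for every subset I* ⊆ {1, …, n} with |I*| = p + 1, the Chebyshev problem min_{θ ∈ ℝ^p} max_{i ∈ I*} |y_i − x_iᵀθ| has a unique solution. -/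
open Finset

noncomputable def dotL (p : ℕ) (a : Fin p → ℝ) : (Fin p → ℝ) →ₗ[ℝ] ℝ :=
  ∑ j, a j • (LinearMap.proj j)

lemma dotL_apply (p : ℕ) (a v : Fin p → ℝ) : dotL p a v = ∑ j, a j * v j := by
  simp [dotL]

lemma inj_on_p (n p : ℕ) (x : Fin n → Fin p → ℝ) (s : Finset (Fin n))
    (hs : s.card = p) (hli : LinearIndependent ℝ (fun i : s => x i))
    (θ θ' : Fin p → ℝ)
    (h : ∀ i ∈ s, ∑ j, x i j * θ j = ∑ j, x i j * θ' j) : θ = θ' := by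
  rcases Nat.eq_zero_or_pos p with hp | hp
  · subst hp; funext j; exact absurd j.2 (by omega)
  haveI : Nonempty s := Finset.nonempty_coe_sort.mpr (Finset.card_pos.mp (hs ▸ hp))
  have hcard : Fintype.card s = Module.finrank ℝ (Fin p → ℝ) := by
    simp [Fintype.card_coe, hs]
  let B := basisOfLinearIndependentOfCardEqFinrank hli hcard
  have hB : ∀ i : s, B i = x i := fun i => by
    simp [B, coe_basisOfLinearIndependentOfCardEqFinrank]
  set d := fun j => θ j - θ' j with hd
  have hL : dotL p d = 0 := by
    apply B.ext
    intro i
    rw [hB]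
    have := h i i.2
    simp only [dotL_apply, LinearMap.zero_apply, hd]
    rw [Finset.sum_congr rfl (fun j _ => by ring_nf :
      ∀ j ∈ Finset.univ, (θ j - θ' j) * x i j = x i j * θ j - x i j * θ' j)]
    rw [Finset.sum_sub_distrib, this, sub_self]
  have hdd : ∑ j, d j * d j = 0 := by
    have := congrArg (fun L => L d) hL
    simpa [dotL_apply] using this
  funext j
  have hj : d j = 0 := by
    have h2 : ∀ j ∈ Finset.univ, (0:ℝ) ≤ d j * d j := fun j _ => mul_self_nonneg _
    have := (Finset.sum_eq_zero_iff_of_nonneg h2).mp hdd j (Finset.mem_univ j)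
    exact mul_self_eq_zero.mp this
  have : θ j - θ' j = 0 := hj
  linarith

lemma surj_on_p (n p : ℕ) (x : Fin n → Fin p → ℝ) (s : Finset (Fin n))
    (hs : s.card = p) (hli : LinearIndependent ℝ (fun i : s => x i))
    (b : Fin n → ℝ) : ∃ θ : Fin p → ℝ, ∀ i ∈ s, ∑ j, x i j * θ j = b i := by
  let M : (Fin p → ℝ) →ₗ[ℝ] (s → ℝ) := LinearMap.pi (fun i => dotL p (x i))
  have hinj : Function.Injective M := by
    intro θ θ' hM
    apply inj_on_p n p x s hs hli
    intro i hi
    have := congrFun hM ⟨i, hi⟩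
    simpa [M, dotL_apply, LinearMap.pi_apply] using this
  have hfr : Module.finrank ℝ (Fin p → ℝ) = Module.finrank ℝ (s → ℝ) := by
    simp [Fintype.card_coe, hs]
  have hsurj : Function.Surjective M :=
    (LinearMap.injective_iff_surjective_of_finrank_eq_finrank hfr).mp hinj
  obtain ⟨θ, hθ⟩ := hsurj (fun i => b i)
  exact ⟨θ, fun i hi => by
    have := congrFun hθ ⟨i, hi⟩
    simpa [M, dotL_apply, LinearMap.pi_apply] using this⟩

/-- Under the Haar condition (every `p` of the vectors `x 1, …, x n` are linearly
independent) and `n ≥ p + 1`, for every subset `I*` of `{1, …, n}` with `|I*| = p + 1`,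
the Chebyshev problem `min_θ max_{i ∈ I*} |y i − x iᵀ θ|` has a unique solution. -/
theorem chebyshev_unique_solution_on_subsets (n p : ℕ) (hn : p + 1 ≤ n)
    (x : Fin n → Fin p → ℝ) (y : Fin n → ℝ)
    (haar : ∀ s : Finset (Fin n), s.card = p →
      LinearIndependent ℝ (fun i : s => x i)) :
    ∀ Istar : Finset (Fin n), Istar.card = p + 1 →
      ∃! θs : Fin p → ℝ, ∀ θ : Fin p → ℝ,
        rho n p x y Istar θs ≤ rho n p x y Istar θ := by
  intro Istar hcard
  have hne : Istar.Nonempty := Finset.card_pos.mp (by omega)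
  have hrho : ∀ θ, rho n p x y Istar θ
      = Istar.sup' hne (fun i => |y i - ∑ j, x i j * θ j|) :=
    fun θ => by rw [rho, dif_pos hne]
  haveI : Nonempty Istar := Finset.nonempty_coe_sort.mpr hne
  -- Step 1: linear dependence of the p+1 vectors
  have hdep : ¬ LinearIndependent ℝ (fun i : Istar => x i) := by
    intro hind
    have h1 := hind.fintype_card_le_finrank
    simp [Fintype.card_coe, hcard] at h1
  obtain ⟨g, hg0, i₀, hgi₀⟩ := Fintype.not_linearIndependent_iff.mp hdep
  set lam : Fin n → ℝ := fun i => if h : i ∈ Istar then g ⟨i, h⟩ else 0 with hlam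
  have hlam_coe : ∀ i : Istar, lam i = g i := fun i => by simp [hlam]
  have hrel : ∀ j, ∑ i ∈ Istar, lam i * x i j = 0 := by
    intro j
    have h1 := congrFun hg0 j
    simp only [Finset.sum_apply, Pi.smul_apply, smul_eq_mul, Pi.zero_apply] at h1
    rw [← Finset.sum_coe_sort Istar (fun i => lam i * x i j)]
    rw [← h1]
    exact Finset.sum_congr rfl (fun i _ => by rw [hlam_coe])
  -- Step 2: all coefficients nonzero
  have hlamne : ∀ i ∈ Istar, lam i ≠ 0 := by
    intro i₂ hi₂ h0
    have hscard : (Istar.erase i₂).card = p := by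
      rw [Finset.card_erase_of_mem hi₂, hcard]
      omega
    have hli := haar _ hscard
    have hall : ∀ i ∈ Istar, lam i = 0 := by
      have hsum : ∑ i : (Istar.erase i₂ : Finset (Fin n)), lam i • x (i : Fin n) = 0 := by
        funext j
        simp only [Finset.sum_apply, Pi.smul_apply, smul_eq_mul, Pi.zero_apply]
        rw [Finset.sum_coe_sort (Istar.erase i₂) (fun i => lam i * x i j)]
        rw [Finset.sum_erase _ (by rw [h0, zero_mul])]
        exact hrel j
      have := Fintype.linearIndependent_iff.mp hli (fun i => lam i) hsum
      intro i hi
      rcases eq_or_ne i i₂ with rfl | hne'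
      · exact h0
      · exact this ⟨i, Finset.mem_erase.mpr ⟨hne', hi⟩⟩
    have : g i₀ = 0 := by rw [← hlam_coe i₀]; exact hall i₀ i₀.2
    exact hgi₀ this
  obtain ⟨i₁, hi₁⟩ := id hne
  have hscard : (Istar.erase i₁).card = p := by
    rw [Finset.card_erase_of_mem hi₁, hcard]
    omega
  have hli := haar _ hscard
  set S := ∑ i ∈ Istar, |lam i| with hSdef
  have hSpos : 0 < S := by
    apply Finset.sum_pos' (fun i _ => abs_nonneg _)
    exact ⟨i₁, hi₁, abs_pos.mpr (hlamne i₁ hi₁)⟩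
  set c := ∑ i ∈ Istar, lam i * y i with hcdef
  set h := c / S with hhdef
  set sg : Fin n → ℝ := fun i => |lam i| / lam i with hsgdef
  have hsg_mul : ∀ i ∈ Istar, lam i * sg i = |lam i| := fun i hi => by
    rw [hsgdef]
    simp only
    rw [mul_comm, div_mul_cancel₀ _ (hlamne i hi)]
  have hsg_abs : ∀ i ∈ Istar, |sg i| = 1 := fun i hi => by
    rw [hsgdef]
    simp only
    rw [abs_div, abs_abs, div_self (abs_ne_zero.mpr (hlamne i hi))]
  have hkey : ∀ θ : Fin p → ℝ, ∑ i ∈ Istar, lam i * (∑ j, x i j * θ j) = 0 := by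
    intro θ
    have h1 : ∑ i ∈ Istar, lam i * (∑ j, x i j * θ j)
        = ∑ j, (∑ i ∈ Istar, lam i * x i j) * θ j := by
      calc ∑ i ∈ Istar, lam i * ∑ j, x i j * θ j
          = ∑ i ∈ Istar, ∑ j, lam i * x i j * θ j := by
            refine Finset.sum_congr rfl fun i _ => ?_
            rw [Finset.mul_sum]
            exact Finset.sum_congr rfl fun j _ => by ring
        _ = ∑ j, ∑ i ∈ Istar, lam i * x i j * θ j := Finset.sum_comm
        _ = ∑ j, (∑ i ∈ Istar, lam i * x i j) * θ j := by
            exact Finset.sum_congr rfl fun j _ => (Finset.sum_mul _ _ _).symm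
    rw [h1]
    simp [hrel]
  have hresid : ∀ θ : Fin p → ℝ, ∑ i ∈ Istar, lam i * (y i - ∑ j, x i j * θ j) = c := by
    intro θ
    simp only [mul_sub]
    rw [Finset.sum_sub_distrib, hkey θ, sub_zero]
  have hSh : S * h = c := by rw [hhdef]; field_simp
  obtain ⟨θs, hθs⟩ := surj_on_p n p x (Istar.erase i₁) hscard hli (fun i => y i - sg i * h)
  have hstar : ∀ i ∈ Istar, y i - ∑ j, x i j * θs j = sg i * h := by
    intro i hi
    rcases eq_or_ne i i₁ with rfl | hne'
    · have h2 : ∑ i ∈ Istar, lam i * (sg i * h) = c := by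
        calc ∑ i ∈ Istar, lam i * (sg i * h) = ∑ i ∈ Istar, |lam i| * h :=
              Finset.sum_congr rfl (fun i hi => by rw [← mul_assoc, hsg_mul i hi])
          _ = S * h := by rw [← Finset.sum_mul]
          _ = c := hSh
      have h3 : ∑ i ∈ Istar,
          (lam i * (y i - ∑ j, x i j * θs j) - lam i * (sg i * h)) = 0 := by
        rw [Finset.sum_sub_distrib, hresid θs, h2, sub_self]
      have h4 : ∑ i ∈ Istar.erase i,
          (lam i * (y i - ∑ j, x i j * θs j) - lam i * (sg i * h)) = 0 :=
        Finset.sum_eq_zero (fun i his => by rw [hθs i his]; ring)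
      have h5 := Finset.add_sum_erase Istar
        (fun i => lam i * (y i - ∑ j, x i j * θs j) - lam i * (sg i * h)) hi
      rw [h4, h3, add_zero] at h5
      have h6 : lam i * ((y i - ∑ j, x i j * θs j) - sg i * h) = 0 := by
        rw [mul_sub]; exact h5
      have h7 := mul_eq_zero.mp h6
      rcases h7 with h7 | h7
      · exact absurd h7 (hlamne i hi)
      · linarith
    · rw [hθs i (Finset.mem_erase.mpr ⟨hne', hi⟩)]
      ring
  have hrs : rho n p x y Istar θs = |h| := by
    rw [hrho]
    apply le_antisymm
    · apply Finset.sup'_le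
      intro i hi
      rw [hstar i hi, abs_mul, hsg_abs i hi, one_mul]
    · calc |h| = |y i₁ - ∑ j, x i₁ j * θs j| := by
            rw [hstar i₁ hi₁, abs_mul, hsg_abs i₁ hi₁, one_mul]
        _ ≤ _ := Finset.le_sup' (fun i => |y i - ∑ j, x i j * θs j|) hi₁
  have hlow : ∀ θ : Fin p → ℝ, |h| ≤ rho n p x y Istar θ := by
    intro θ
    rw [hrho]
    set R := Istar.sup' hne (fun i => |y i - ∑ j, x i j * θ j|) with hR
    have hRb : ∀ i ∈ Istar, |y i - ∑ j, x i j * θ j| ≤ R :=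
      fun i hi => Finset.le_sup' (fun i => |y i - ∑ j, x i j * θ j|) hi
    have hc : |c| ≤ S * R := by
      rw [← hresid θ]
      calc |∑ i ∈ Istar, lam i * (y i - ∑ j, x i j * θ j)|
          ≤ ∑ i ∈ Istar, |lam i * (y i - ∑ j, x i j * θ j)| :=
            Finset.abs_sum_le_sum_abs _ _
        _ ≤ ∑ i ∈ Istar, |lam i| * R := Finset.sum_le_sum (fun i hi => by
              rw [abs_mul]
              exact mul_le_mul_of_nonneg_left (hRb i hi) (abs_nonneg _))
        _ = S * R := by rw [← Finset.sum_mul]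
    rw [hhdef, abs_div, abs_of_pos hSpos, div_le_iff₀ hSpos]
    linarith
  refine ⟨θs, fun θ => by rw [hrs]; exact hlow θ, ?_⟩
  intro θ hθ
  have hρθ : rho n p x y Istar θ = |h| :=
    le_antisymm (le_trans (hθ θs) (le_of_eq hrs)) (hlow θ)
  have hrb : ∀ i ∈ Istar, |y i - ∑ j, x i j * θ j| ≤ |h| := by
    intro i hi
    rw [← hρθ, hrho]
    exact Finset.le_sup' (fun i => |y i - ∑ j, x i j * θ j|) hi
  have hsum1 : ∑ i ∈ Istar, lam i * (y i - ∑ j, x i j * θ j)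
      = ∑ i ∈ Istar, |lam i| * h := by
    rw [hresid θ, ← Finset.sum_mul, ← hSdef, hSh]
  have hterm : ∀ i ∈ Istar,
      lam i * (y i - ∑ j, x i j * θ j) = |lam i| * h := by
    rcases le_or_gt 0 h with hh | hh
    · have hle : ∀ i ∈ Istar,
          lam i * (y i - ∑ j, x i j * θ j) ≤ |lam i| * h := by
        intro i hi
        calc lam i * (y i - ∑ j, x i j * θ j)
            ≤ |lam i * (y i - ∑ j, x i j * θ j)| := le_abs_self _
          _ = |lam i| * |y i - ∑ j, x i j * θ j| := abs_mul _ _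
          _ ≤ |lam i| * |h| := mul_le_mul_of_nonneg_left (hrb i hi) (abs_nonneg _)
          _ = |lam i| * h := by rw [abs_of_nonneg hh]
      exact fun i hi => ((Finset.sum_eq_sum_iff_of_le hle).mp hsum1) i hi
    · have hle : ∀ i ∈ Istar,
          |lam i| * h ≤ lam i * (y i - ∑ j, x i j * θ j) := by
        intro i hi
        have h1 : |lam i * (y i - ∑ j, x i j * θ j)| ≤ |lam i| * (-h) := by
          rw [abs_mul]
          calc |lam i| * |y i - ∑ j, x i j * θ j|
              ≤ |lam i| * |h| := mul_le_mul_of_nonneg_left (hrb i hi) (abs_nonneg _)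
            _ = |lam i| * (-h) := by rw [abs_of_neg hh]
        have h2 := neg_abs_le (lam i * (y i - ∑ j, x i j * θ j))
        nlinarith
      exact fun i hi => (((Finset.sum_eq_sum_iff_of_le hle).mp hsum1.symm) i hi).symm
  have hreq : ∀ i ∈ Istar, ∑ j, x i j * θ j = ∑ j, x i j * θs j := by
    intro i hi
    have h1 : lam i * (y i - ∑ j, x i j * θ j) = lam i * (sg i * h) := by
      rw [hterm i hi, ← mul_assoc, hsg_mul i hi]
    have h2 : y i - ∑ j, x i j * θ j = sg i * h := mul_left_cancel₀ (hlamne i hi) h1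
    have h3 := hstar i hi
    linarith
  exact inj_on_p n p x (Istar.erase i₁) hscard hli θ θs
    (fun i hi => hreq i (Finset.mem_of_mem_erase hi))
end

section
/- Let n ≥ p + 1, let x_1, …, x_n ∈ ℝ^p satisfy the Haar condition (every p of the vectors x_1, …, x_n are linearly independent), let y_1, …, y_n ∈ ℝ, fix 0 ≤ k ≤ n − (p + 1), and define f_k(θ) = min over all subsets I of size n − k of max_{i ∈ I} |y_i − x_iᵀθ|. Then every local minimizer of f_k is the unique global minimizer of ρ_{I*}(θ) = max_{i ∈ I*} |y_i − x_iᵀθ| for some subset I* of cardinality p + 1; consequently, the set of local minimizers of f_k is finite and has cardinality at most C(n, p+1) (the binomial coefficient n choose p+1). -/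
section aux
variable {n p : ℕ} (x : Fin n → Fin p → ℝ) (y : Fin n → ℝ)

/-- residual -/
def resid (i : Fin n) (θ : Fin p → ℝ) : ℝ := y i - ∑ j, x i j * θ j

lemma rho_eq (I : Finset (Fin n)) (hI : I.Nonempty) (θ : Fin p → ℝ) :
    rho n p x y I θ = I.sup' hI (fun i => |resid x y i θ|) := dif_pos hI

lemma resid_combo (i : Fin n) (a b : ℝ) (hab : a + b = 1) (θ1 θ2 : Fin p → ℝ) :
    resid x y i (a • θ1 + b • θ2) = a * resid x y i θ1 + b * resid x y i θ2 := by
  simp only [resid, Pi.add_apply, Pi.smul_apply, smul_eq_mul, mul_add,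
    Finset.sum_add_distrib]
  have h1 : ∑ j, x i j * (a * θ1 j) = a * ∑ j, x i j * θ1 j := by
    rw [Finset.mul_sum]; exact Finset.sum_congr rfl fun j _ => by ring
  have h2 : ∑ j, x i j * (b * θ2 j) = b * ∑ j, x i j * θ2 j := by
    rw [Finset.mul_sum]; exact Finset.sum_congr rfl fun j _ => by ring
  rw [h1, h2]; linear_combination y i * hab.symm

lemma resid_add_smul (i : Fin n) (t : ℝ) (θ e : Fin p → ℝ) :
    resid x y i (θ + t • e) = resid x y i θ - t * ∑ j, x i j * e j := by
  simp only [resid, Pi.add_apply, Pi.smul_apply, smul_eq_mul, mul_add,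
    Finset.sum_add_distrib]
  have h : ∑ j, x i j * (t * e j) = t * ∑ j, x i j * e j := by
    rw [Finset.mul_sum]; exact Finset.sum_congr rfl fun j _ => by ring
  rw [h]; ring

lemma abs_resid_le (I : Finset (Fin n)) (hI : I.Nonempty) (θ : Fin p → ℝ)
    {i : Fin n} (hi : i ∈ I) : |resid x y i θ| ≤ rho n p x y I θ := by
  rw [rho_eq x y I hI]; exact Finset.le_sup' (fun i => |resid x y i θ|) hi

lemma rho_mono (I J : Finset (Fin n)) (hIJ : I ⊆ J) (hI : I.Nonempty) (θ : Fin p → ℝ) :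
    rho n p x y I θ ≤ rho n p x y J θ := by
  rw [rho_eq x y I hI, rho_eq x y J (hI.mono hIJ)]
  exact Finset.sup'_le _ _ fun i hi => Finset.le_sup' (fun i => |resid x y i θ|) (hIJ hi)

lemma rho_convex (I : Finset (Fin n)) (hI : I.Nonempty) {a b : ℝ} (ha : 0 ≤ a) (hb : 0 ≤ b)
    (hab : a + b = 1) (θ1 θ2 : Fin p → ℝ) :
    rho n p x y I (a • θ1 + b • θ2) ≤ a * rho n p x y I θ1 + b * rho n p x y I θ2 := by
  rw [rho_eq x y I hI]
  refine Finset.sup'_le _ _ fun i hi => ?_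
  calc |resid x y i (a • θ1 + b • θ2)| = |a * resid x y i θ1 + b * resid x y i θ2| := by
        rw [resid_combo x y i a b hab]
    _ ≤ a * |resid x y i θ1| + b * |resid x y i θ2| := by
        refine (abs_add_le _ _).trans ?_
        rw [abs_mul, abs_mul, abs_of_nonneg ha, abs_of_nonneg hb]
    _ ≤ a * rho n p x y I θ1 + b * rho n p x y I θ2 := by
        gcongr <;> exact abs_resid_le x y I hI _ ‹_›

/-- L4: if the dot products with a full independent set of size `p` vanish, the vector is 0. -/
lemma dot_zero (haar : ∀ s : Finset (Fin n), s.card = p →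
      LinearIndependent ℝ (fun i : s => x i))
    (s : Finset (Fin n)) (hs : s.card = p) (d : Fin p → ℝ)
    (hd : ∀ i ∈ s, ∑ j, x i j * d j = 0) : d = 0 := by
  classical
  rcases Nat.eq_zero_or_pos p with hp | hp
  · subst hp; funext j; exact absurd j.2 (by simp)
  have hsne : s.Nonempty := Finset.card_pos.mp (hs ▸ hp)
  have : Nonempty s := ⟨⟨hsne.choose, hsne.choose_spec⟩⟩
  have li := haar s hs
  have hcard : Fintype.card s = Module.finrank ℝ (Fin p → ℝ) := by
    rw [Fintype.card_coe, hs, Module.finrank_fintype_fun_eq_card, Fintype.card_fin]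
  let bas := basisOfLinearIndependentOfCardEqFinrank li hcard
  let φ : (Fin p → ℝ) →ₗ[ℝ] ℝ :=
    { toFun := fun v => ∑ j, v j * d j
      map_add' := fun v w => by simp [add_mul, Finset.sum_add_distrib]
      map_smul' := fun c v => by simp [Finset.mul_sum, mul_assoc] }
  have hφ : φ = 0 := by
    refine bas.ext fun i => ?_
    have : bas i = x i := by
      simp [bas, coe_basisOfLinearIndependentOfCardEqFinrank]
    rw [this]
    simpa [φ] using hd i i.2
  have : φ d = 0 := by rw [hφ]; rfl
  have hsum : ∑ j, d j * d j = 0 := this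
  funext j
  have := (Finset.sum_eq_zero_iff_of_nonneg (fun j _ => mul_self_nonneg (d j))).mp hsum j
    (Finset.mem_univ j)
  exact mul_self_eq_zero.mp this

/-- L5: prescribe dot products on at most `p` indices. -/
lemma solve_dots (haar : ∀ s : Finset (Fin n), s.card = p →
      LinearIndependent ℝ (fun i : s => x i)) (hpn : p ≤ n)
    (B : Finset (Fin n)) (hB : B.card ≤ p) (w : Fin n → ℝ) :
    ∃ e : Fin p → ℝ, ∀ i ∈ B, ∑ j, x i j * e j = w i := by
  classical
  obtain ⟨s, hBs, hsu, hs⟩ := Finset.exists_subsuperset_card_eq B.subset_univ hB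
    (by simpa using hpn)
  let T : (Fin p → ℝ) →ₗ[ℝ] (s → ℝ) :=
    { toFun := fun e i => ∑ j, x i j * e j
      map_add' := fun v w => by funext i; simp [mul_add, Finset.sum_add_distrib]
      map_smul' := fun c v => by
        funext i
        simp only [Pi.smul_apply, smul_eq_mul, RingHom.id_apply]
        rw [Finset.mul_sum]
        exact Finset.sum_congr rfl fun j _ => by ring }
  have hinj : Function.Injective T := by
    rw [← LinearMap.ker_eq_bot]
    refine (Submodule.eq_bot_iff _).mpr fun e he => ?_
    have : ∀ i ∈ s, ∑ j, x i j * e j = 0 := fun i hi => congrFun he ⟨i, hi⟩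
    exact dot_zero x haar s hs e this
  have hfr : Module.finrank ℝ (Fin p → ℝ) = Module.finrank ℝ (s → ℝ) := by
    rw [Module.finrank_fintype_fun_eq_card, Module.finrank_fintype_fun_eq_card,
      Fintype.card_fin, Fintype.card_coe, hs]
  obtain ⟨e, he⟩ := (LinearMap.injective_iff_surjective_of_finrank_eq_finrank hfr).mp hinj
    (fun i => w i)
  exact ⟨e, fun i hi => congrFun he ⟨i, hBs hi⟩⟩


/-- Uniqueness of the global minimizer of `rho` on a `(p+1)`-set under Haar. -/
lemma rho_min_unique (haar : ∀ s : Finset (Fin n), s.card = p →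
      LinearIndependent ℝ (fun i : s => x i)) (hpn : p ≤ n)
    (Istar : Finset (Fin n)) (hcard : Istar.card = p + 1) (θ1 θ2 : Fin p → ℝ)
    (h1 : ∀ θ, rho n p x y Istar θ1 ≤ rho n p x y Istar θ)
    (h2 : ∀ θ, rho n p x y Istar θ2 ≤ rho n p x y Istar θ) : θ1 = θ2 := by
  classical
  have hne : Istar.Nonempty := Finset.card_pos.mp (by omega)
  set m := rho n p x y Istar θ1 with hm
  have hm2 : rho n p x y Istar θ2 = m := le_antisymm (h2 θ1) (h1 θ2)
  have hb1 : ∀ i ∈ Istar, |resid x y i θ1| ≤ m := fun i hi => abs_resid_le x y Istar hne θ1 hi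
  have hb2 : ∀ i ∈ Istar, |resid x y i θ2| ≤ m := fun i hi =>
    hm2 ▸ abs_resid_le x y Istar hne θ2 hi
  -- key claim: residuals agree on Istar
  have hr : ∀ i ∈ Istar, resid x y i θ1 = resid x y i θ2 := by
    by_contra hcon
    push_neg at hcon
    obtain ⟨i0, hi0, hne0⟩ := hcon
    have hm0 : 0 ≤ m := le_trans (abs_nonneg _) (hb1 i0 hi0)
    rcases eq_or_lt_of_le hm0 with hm0' | hmpos
    · apply hne0
      have e1 : |resid x y i0 θ1| ≤ 0 := hm0' ▸ hb1 i0 hi0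
      have e2 : |resid x y i0 θ2| ≤ 0 := hm0' ▸ hb2 i0 hi0
      rw [abs_nonpos_iff.mp e1, abs_nonpos_iff.mp e2]
    -- midpoint
    set θm := (1/2 : ℝ) • θ1 + (1/2 : ℝ) • θ2 with hθm
    have hresm : ∀ i : Fin n, resid x y i θm =
        (1/2) * resid x y i θ1 + (1/2) * resid x y i θ2 :=
      fun i => resid_combo x y i (1/2) (1/2) (by norm_num) θ1 θ2
    have hbm : ∀ i ∈ Istar, |resid x y i θm| ≤ m := by
      intro i hi
      rw [hresm i]
      calc |(1/2) * resid x y i θ1 + (1/2) * resid x y i θ2|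
          ≤ |(1/2) * resid x y i θ1| + |(1/2) * resid x y i θ2| := abs_add_le _ _
        _ ≤ m := by
            rw [abs_mul, abs_mul]
            have := hb1 i hi; have := hb2 i hi
            rw [abs_of_nonneg (by norm_num : (0:ℝ) ≤ 1/2)]
            linarith
    have hi0m : |resid x y i0 θm| < m := by
      have ha := abs_le.mp (hb1 i0 hi0)
      have hbb := abs_le.mp (hb2 i0 hi0)
      rw [hresm i0]
      rcases hne0.lt_or_gt with hlt | hlt <;>
        (rw [abs_lt]; constructor <;> nlinarith)
    set B := Istar.filter (fun i => |resid x y i θm| = m) with hB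
    have hBsub : B ⊆ Istar.erase i0 := by
      intro i hi
      rw [Finset.mem_filter] at hi
      refine Finset.mem_erase.mpr ⟨?_, hi.1⟩
      rintro rfl; exact absurd hi.2 (ne_of_lt hi0m)
    have hBcard : B.card ≤ p := by
      have := Finset.card_le_card hBsub
      rw [Finset.card_erase_of_mem hi0, hcard] at this
      omega
    obtain ⟨e, he⟩ := solve_dots x haar hpn B hBcard (fun i => resid x y i θm)
    -- eventually all residuals < m
    have hev : ∀ i ∈ Istar, ∀ᶠ t in nhdsWithin (0:ℝ) (Set.Ioi 0),
        |resid x y i (θm + t • e)| < m := by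
      intro i hi
      by_cases hiB : i ∈ B
      · filter_upwards [Ioo_mem_nhdsGT_of_mem (by norm_num : (0:ℝ) ∈ Set.Ico (0:ℝ) 1)]
          with t ht
        rw [resid_add_smul, he i hiB]
        have habs : |resid x y i θm| = m := (Finset.mem_filter.mp hiB).2
        calc |resid x y i θm - t * resid x y i θm| = |(1 - t) * resid x y i θm| := by
              ring_nf
          _ = (1 - t) * m := by
              rw [abs_mul, habs, abs_of_nonneg (by linarith [ht.2] : (0:ℝ) ≤ 1 - t)]
          _ < m := by nlinarith [ht.1, ht.2]
      · have hlt : |resid x y i θm| < m :=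
          lt_of_le_of_ne (hbm i hi) (fun h => hiB (Finset.mem_filter.mpr ⟨hi, h⟩))
        have hopen : IsOpen {t : ℝ | |resid x y i θm - t * ∑ j, x i j * e j| < m} := by
          apply isOpen_lt ?_ continuous_const
          exact (continuous_const.sub ((continuous_id.mul continuous_const))).abs
        have hmem : {t : ℝ | |resid x y i θm - t * ∑ j, x i j * e j| < m} ∈
            nhdsWithin (0:ℝ) (Set.Ioi 0) := by
          apply mem_nhdsWithin_of_mem_nhds
          exact hopen.mem_nhds (by simpa using hlt)
        filter_upwards [hmem] with t ht
        rw [resid_add_smul]; exact ht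
    rw [← Filter.eventually_all_finset] at hev
    obtain ⟨t, ht⟩ := hev.exists
    have hlt : rho n p x y Istar (θm + t • e) < m := by
      rw [rho_eq x y Istar hne]
      exact (Finset.sup'_lt_iff hne).mpr ht
    exact absurd (h1 (θm + t • e)) (not_le.mpr hlt)
  -- conclude via Haar
  have hd : ∀ i ∈ Istar, ∑ j, x i j * (θ1 j - θ2 j) = 0 := by
    intro i hi
    have := hr i hi
    simp only [resid] at this
    have : ∑ j, x i j * θ1 j = ∑ j, x i j * θ2 j := by linarith
    calc ∑ j, x i j * (θ1 j - θ2 j) = ∑ j, x i j * θ1 j - ∑ j, x i j * θ2 j := by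
          rw [← Finset.sum_sub_distrib]; exact Finset.sum_congr rfl fun j _ => by ring
      _ = 0 := by rw [this]; ring
  obtain ⟨s, hssub, hscard⟩ := Istar.exists_subset_card_eq (n := p) (by omega)
  have := dot_zero x haar s hscard (fun j => θ1 j - θ2 j) (fun i hi => hd i (hssub hi))
  funext j
  have := congrFun this j
  simpa [sub_eq_zero] using this

/-- Helly extraction: a global min of `rho I` is a global min of `rho Istar` for some
`(p+1)`-subset. -/
lemma exists_pplusone_subset
    (I : Finset (Fin n)) (hIcard : p + 1 ≤ I.card) (θs : Fin p → ℝ)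
    (hmin : ∀ θ, rho n p x y I θs ≤ rho n p x y I θ) :
    ∃ Istar : Finset (Fin n), Istar ⊆ I ∧ Istar.card = p + 1 ∧
      ∀ θ, rho n p x y Istar θs ≤ rho n p x y Istar θ := by
  classical
  by_contra hcon
  push_neg at hcon
  have hIne : I.Nonempty := Finset.card_pos.mp (by omega)
  set P := I.powersetCard (p+1) with hP
  have hPne : P.Nonempty := Finset.powersetCard_nonempty.mpr hIcard
  have hg : ∀ J ∈ P, ∃ θ, rho n p x y J θ < rho n p x y J θs := by
    intro J hJ
    obtain ⟨hJI, hJc⟩ := Finset.mem_powersetCard.mp hJ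
    obtain ⟨θ, hθ⟩ := hcon J hJI hJc
    exact ⟨θ, hθ⟩
  choose g hgspec using hg
  have hPane : P.attach.Nonempty := hPne.attach
  set m' := P.attach.sup' hPane (fun J => rho n p x y J.1 (g J.1 J.2)) with hm'
  have hm'lt : m' < rho n p x y I θs := by
    rw [hm']
    refine (Finset.sup'_lt_iff hPane).mpr fun J _ => ?_
    have hJne : J.1.Nonempty := by
      have := (Finset.mem_powersetCard.mp J.2).2
      exact Finset.card_pos.mp (by omega)
    exact lt_of_lt_of_le (hgspec J.1 J.2)
      (rho_mono x y J.1 I (Finset.mem_powersetCard.mp J.2).1 hJne θs)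
  -- Helly
  have hfr : Module.finrank ℝ (Fin p → ℝ) = p := by
    rw [Module.finrank_fintype_fun_eq_card, Fintype.card_fin]
  have hhelly : (⋂ i ∈ I, {θ : Fin p → ℝ | |resid x y i θ| ≤ m'}).Nonempty := by
    apply Convex.helly_theorem' (𝕜 := ℝ)
    · intro i _
      intro θ1 hθ1 θ2 hθ2 a b ha hb hab
      simp only [Set.mem_setOf_eq] at *
      calc |resid x y i (a • θ1 + b • θ2)| = |a * resid x y i θ1 + b * resid x y i θ2| := by
            rw [resid_combo x y i a b hab]
        _ ≤ a * |resid x y i θ1| + b * |resid x y i θ2| := by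
            refine (abs_add_le _ _).trans ?_
            rw [abs_mul, abs_mul, abs_of_nonneg ha, abs_of_nonneg hb]
        _ ≤ a * m' + b * m' := by gcongr
        _ = m' := by rw [← add_mul, hab, one_mul]
    · intro J hJI hJcard
      rw [hfr] at hJcard
      obtain ⟨K, hJK, hKI, hKc⟩ := Finset.exists_subsuperset_card_eq hJI hJcard hIcard
      have hKP : K ∈ P := Finset.mem_powersetCard.mpr ⟨hKI, hKc⟩
      have hKne : K.Nonempty := Finset.card_pos.mp (by omega)
      refine ⟨g K hKP, ?_⟩
      simp only [Set.mem_iInter, Set.mem_setOf_eq]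
      intro i hi
      calc |resid x y i (g K hKP)| ≤ rho n p x y K (g K hKP) :=
            abs_resid_le x y K hKne _ (hJK hi)
        _ ≤ m' := Finset.le_sup' (fun J => rho n p x y J.1 (g J.1 J.2))
            (Finset.mem_attach P ⟨K, hKP⟩)
  obtain ⟨θc, hθc⟩ := hhelly
  simp only [Set.mem_iInter, Set.mem_setOf_eq] at hθc
  have : rho n p x y I θc ≤ m' := by
    rw [rho_eq x y I hIne]
    exact Finset.sup'_le _ _ fun i hi => hθc i hi
  exact absurd (hmin θc) (not_le.mpr (lt_of_le_of_lt this hm'lt))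

/-- A local minimizer of `fk` is a global minimizer of `rho I` for some achieving
`(n-k)`-subset `I`. -/
lemma localMin_global (k : ℕ) (hn : p + 1 ≤ n) (hk : k ≤ n - (p + 1)) (θs : Fin p → ℝ)
    (hloc : IsLocalMin (fk n p x y k) θs) :
    ∃ I : Finset (Fin n), I.card = n - k ∧ ∀ θ, rho n p x y I θs ≤ rho n p x y I θ := by
  classical
  have hnk : p + 1 ≤ n - k := by omega
  set P := Finset.powersetCard (n - k) (Finset.univ : Finset (Fin n)) with hPdef
  have hPne : P.Nonempty := Finset.powersetCard_nonempty.mpr (by simpa using Nat.sub_le n k)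
  obtain ⟨I, hIP, hIeq⟩ := Finset.exists_mem_eq_inf' hPne (fun I => rho n p x y I θs)
  have hIcard : I.card = n - k := (Finset.mem_powersetCard.mp hIP).2
  have hIne : I.Nonempty := Finset.card_pos.mp (by omega)
  refine ⟨I, hIcard, fun θ => ?_⟩
  -- fk θs = rho I θs
  have hfkθs : fk n p x y k θs = rho n p x y I θs := by rw [fk, dif_pos hPne]; exact hIeq
  have hfk_le : ∀ θ', fk n p x y k θ' ≤ rho n p x y I θ' := by
    intro θ'
    rw [fk, dif_pos hPne]
    exact Finset.inf'_le _ hIP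
  obtain ⟨ε, hε, hball⟩ := Metric.eventually_nhds_iff.mp hloc
  set c := dist θ θs with hc
  set t := min (1/2 : ℝ) (ε / (2 * (c + 1))) with ht
  have hc0 : 0 ≤ c := dist_nonneg
  have ht0 : 0 < t := lt_min (by norm_num) (by positivity)
  have ht1 : t ≤ 1/2 := min_le_left _ _
  set θt := (1 - t) • θs + t • θ with hθt
  have hdist : dist θt θs < ε := by
    have hsub : θt - θs = t • (θ - θs) := by rw [hθt]; module
    rw [dist_eq_norm, hsub, norm_smul, Real.norm_eq_abs, abs_of_pos ht0]
    have hn2 : ‖θ - θs‖ = c := by rw [hc, dist_eq_norm]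
    rw [hn2]
    have : t ≤ ε / (2 * (c + 1)) := min_le_right _ _
    have h2 : t * c ≤ ε / (2 * (c + 1)) * c := by nlinarith
    have h3 : ε / (2 * (c + 1)) * c < ε := by
      rw [div_mul_eq_mul_div, div_lt_iff₀ (by positivity)]
      nlinarith
    linarith
  have hlocal := hball hdist
  have hconv : rho n p x y I θt ≤ (1 - t) * rho n p x y I θs + t * rho n p x y I θ :=
    rho_convex x y I hIne (by linarith) (le_of_lt ht0) (by ring) θs θ
  have : rho n p x y I θs ≤ (1 - t) * rho n p x y I θs + t * rho n p x y I θ := by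
    calc rho n p x y I θs = fk n p x y k θs := hfkθs.symm
      _ ≤ fk n p x y k θt := hlocal
      _ ≤ rho n p x y I θt := hfk_le θt
      _ ≤ _ := hconv
  nlinarith

end aux

/-- Under the Haar condition, every local minimizer of `f_k` is the unique global
minimizer of `ρ_{I*}` for some `(p+1)`-element subset `I*`; consequently the set of
local minimizers of `f_k` is finite with at most `C(n, p+1)` elements. -/
theorem localMin_fk_unique_globalMin_and_card_bound (n p k : ℕ) (hn : p + 1 ≤ n)
    (hk : k ≤ n - (p + 1)) (x : Fin n → Fin p → ℝ) (y : Fin n → ℝ)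
    (haar : ∀ s : Finset (Fin n), s.card = p →
      LinearIndependent ℝ (fun i : s => x i)) :
    (∀ θs : Fin p → ℝ, IsLocalMin (fk n p x y k) θs →
      ∃ Istar : Finset (Fin n), Istar.card = p + 1 ∧
        (∀ θ : Fin p → ℝ, rho n p x y Istar θs ≤ rho n p x y Istar θ) ∧
        (∀ θ' : Fin p → ℝ,
          (∀ θ : Fin p → ℝ, rho n p x y Istar θ' ≤ rho n p x y Istar θ) → θ' = θs)) ∧
    {θs : Fin p → ℝ | IsLocalMin (fk n p x y k) θs}.Finite ∧
    {θs : Fin p → ℝ | IsLocalMin (fk n p x y k) θs}.ncard ≤ Nat.choose n (p + 1) := by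
  classical
  have hpn : p ≤ n := by omega
  have part1 : ∀ θs : Fin p → ℝ, IsLocalMin (fk n p x y k) θs →
      ∃ Istar : Finset (Fin n), Istar.card = p + 1 ∧
        (∀ θ : Fin p → ℝ, rho n p x y Istar θs ≤ rho n p x y Istar θ) ∧
        (∀ θ' : Fin p → ℝ,
          (∀ θ : Fin p → ℝ, rho n p x y Istar θ' ≤ rho n p x y Istar θ) → θ' = θs) := by
    intro θs hloc
    obtain ⟨I, hIcard, hImin⟩ := localMin_global x y k hn hk θs hloc
    obtain ⟨Istar, _, hIsc, hIsmin⟩ := exists_pplusone_subset x y I (by omega) θs hImin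
    exact ⟨Istar, hIsc, hIsmin,
      fun θ' hθ' => rho_min_unique x y haar hpn Istar hIsc θ' θs hθ' hIsmin⟩
  refine ⟨part1, ?_⟩
  set S := {θs : Fin p → ℝ | IsLocalMin (fk n p x y k) θs} with hS
  set Φ : (Fin p → ℝ) → Finset (Fin n) := fun θ =>
    if h : IsLocalMin (fk n p x y k) θ then (part1 θ h).choose else ∅ with hΦ
  have hΦdef : ∀ θ (h : IsLocalMin (fk n p x y k) θ), Φ θ = (part1 θ h).choose :=
    fun θ h => dif_pos h
  have hinj : Set.InjOn Φ S := by
    intro a ha b hb hab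
    rw [hΦdef a ha, hΦdef b hb] at hab
    obtain ⟨_, hga, _⟩ := (part1 a ha).choose_spec
    obtain ⟨_, _, hub⟩ := (part1 b hb).choose_spec
    exact hub a (hab ▸ hga)
  have hmaps : ∀ a ∈ S, Φ a ∈ Finset.powersetCard (p+1) (Finset.univ : Finset (Fin n)) := by
    intro a ha
    rw [hΦdef a ha]
    exact Finset.mem_powersetCard_univ.mpr (part1 a ha).choose_spec.1
  have himg : Φ '' S ⊆ ↑(Finset.powersetCard (p+1) (Finset.univ : Finset (Fin n))) := by
    rintro _ ⟨a, ha, rfl⟩; exact hmaps a ha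
  have hfin : S.Finite :=
    Set.Finite.of_finite_image ((Finset.finite_toSet _).subset himg) hinj
  refine ⟨hfin, ?_⟩
  calc S.ncard = (Φ '' S).ncard := (Set.ncard_image_of_injOn hinj).symm
    _ ≤ (↑(Finset.powersetCard (p+1) (Finset.univ : Finset (Fin n))) : Set (Finset (Fin n))).ncard :=
        Set.ncard_le_ncard himg (Finset.finite_toSet _)
    _ = (Finset.powersetCard (p+1) (Finset.univ : Finset (Fin n))).card :=
        Set.ncard_coe_finset _
    _ = Nat.choose n (p+1) := by
        rw [Finset.card_powersetCard, Finset.card_univ, Fintype.card_fin]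
end

section
/- For all natural numbers p ≥ 0 and m ≥ 0, the following identity holds: Σ_{j=0}^{m} 2^{m−j} · C(p+j, p) = Σ_{j=0}^{m} C(p+1+m, j), where C(a, b) denotes the binomial coefficient a choose b. -/
/-- For all naturals `p, m`:
`Σ_{j=0}^{m} 2^(m−j) · C(p+j, p) = Σ_{j=0}^{m} C(p+1+m, j)`. -/
theorem sum_two_pow_mul_choose_eq_sum_choose (p m : ℕ) :
    ∑ j ∈ Finset.range (m + 1), 2 ^ (m - j) * Nat.choose (p + j) p =
      ∑ j ∈ Finset.range (m + 1), Nat.choose (p + 1 + m) j := by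
  induction m with
  | zero => simp
  | succ m ih =>
    have hL : ∑ j ∈ Finset.range (m + 1 + 1), 2 ^ (m + 1 - j) * Nat.choose (p + j) p
        = 2 * (∑ j ∈ Finset.range (m + 1), 2 ^ (m - j) * Nat.choose (p + j) p)
          + Nat.choose (p + (m + 1)) p := by
      rw [Finset.sum_range_succ, Finset.mul_sum]
      congr 1
      · apply Finset.sum_congr rfl
        intro j hj
        have hjm : j ≤ m := Nat.lt_succ_iff.mp (Finset.mem_range.mp hj)
        rw [show m + 1 - j = (m - j) + 1 by omega, pow_succ]
        ring
      · simp
    have hR : ∑ j ∈ Finset.range (m + 1 + 1), Nat.choose (p + 1 + (m + 1)) j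
        = 2 * (∑ j ∈ Finset.range (m + 1), Nat.choose (p + 1 + m) j)
          + Nat.choose (p + 1 + m) (m + 1) := by
      rw [Finset.sum_range_succ' (fun j => Nat.choose (p + 1 + (m + 1)) j)]
      have hpasc : ∀ j, Nat.choose (p + 1 + (m + 1)) (j + 1)
          = Nat.choose (p + 1 + m) j + Nat.choose (p + 1 + m) (j + 1) := by
        intro j
        rw [show p + 1 + (m + 1) = (p + 1 + m) + 1 by ring, Nat.choose_succ_succ]
      simp only [hpasc]
      rw [Finset.sum_add_distrib]
      have key : (∑ j ∈ Finset.range (m + 1), Nat.choose (p + 1 + m) (j + 1))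
          + Nat.choose (p + 1 + m) 0
          = (∑ j ∈ Finset.range (m + 1), Nat.choose (p + 1 + m) j)
            + Nat.choose (p + 1 + m) (m + 1) := by
        rw [← Finset.sum_range_succ' (fun j => Nat.choose (p + 1 + m) j) (m + 1),
          Finset.sum_range_succ]
      simp only [Nat.choose_zero_right] at key ⊢
      omega
    have hsym : Nat.choose (p + 1 + m) (m + 1) = Nat.choose (p + (m + 1)) p := by
      rw [show p + 1 + m = p + (m + 1) by ring]
      rw [← Nat.choose_symm (by omega : m + 1 ≤ p + (m + 1))]
      congr 1
      omega
    rw [hL, hR, ih, hsym]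
end

section
/- Fix a natural number p and suppose M : ℕ → ℕ is a sequence satisfying, for every m ≥ 0, the equation Σ_{j=0}^{m} 2^{m−j} · M(j) = Σ_{j=0}^{m} C(p+1+m, j). Then M(j) = C(p+j, p) for every j ≥ 0; i.e., the sequence j ↦ C(p+j, p) is the unique solution of this family of equations. -/
lemma choose_sum_succ (n k : ℕ) :
    ∑ j ∈ Finset.range (k + 2), Nat.choose (n + 1) j =
    2 * ∑ j ∈ Finset.range (k + 1), Nat.choose n j + Nat.choose n (k + 1) := by
  rw [Finset.sum_range_succ' (fun j => Nat.choose (n + 1) j)]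
  simp only [Nat.choose_succ_succ, Finset.sum_add_distrib, Nat.choose_zero_right,
    Nat.succ_eq_add_one]
  have h : ∑ i ∈ Finset.range (k + 1), Nat.choose n (i + 1) + 1 =
      ∑ i ∈ Finset.range (k + 2), Nat.choose n i := by
    rw [Finset.sum_range_succ' (fun j => Nat.choose n j)]
    simp
  have h2 : ∑ i ∈ Finset.range (k + 2), Nat.choose n i =
      ∑ i ∈ Finset.range (k + 1), Nat.choose n i + Nat.choose n (k + 1) :=
    Finset.sum_range_succ _ _
  omega

lemma key_sum (p : ℕ) : ∀ m : ℕ,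
    ∑ j ∈ Finset.range (m + 1), 2 ^ (m - j) * Nat.choose (p + j) p =
    ∑ j ∈ Finset.range (m + 1), Nat.choose (p + 1 + m) j := by
  intro m
  induction m with
  | zero => simp
  | succ m ih =>
    have hL : ∑ j ∈ Finset.range (m + 2), 2 ^ (m + 1 - j) * Nat.choose (p + j) p =
        2 * ∑ j ∈ Finset.range (m + 1), 2 ^ (m - j) * Nat.choose (p + j) p +
          Nat.choose (p + (m + 1)) p := by
      rw [Finset.sum_range_succ]
      have : ∀ j ∈ Finset.range (m + 1),
          2 ^ (m + 1 - j) * Nat.choose (p + j) p =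
          2 * (2 ^ (m - j) * Nat.choose (p + j) p) := by
        intro j hj
        have hj' : j ≤ m := Nat.lt_succ_iff.mp (Finset.mem_range.mp hj)
        rw [← mul_assoc, ← pow_succ']
        congr 2
        omega
      rw [Finset.sum_congr rfl this, ← Finset.mul_sum]
      simp
    have hch : Nat.choose (p + m + 1) (m + 1) = Nat.choose (p + (m + 1)) p := by
      have h := Nat.choose_symm (n := p + m + 1) (k := m + 1) (by omega)
      rw [show p + m + 1 - (m + 1) = p from by omega] at h
      rw [show p + (m + 1) = p + m + 1 from by omega]
      exact h.symm
    have hR := choose_sum_succ (p + m + 1) m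
    rw [hL, ih]
    have e1 : p + 1 + (m + 1) = p + m + 1 + 1 := by omega
    have e2 : p + 1 + m = p + m + 1 := by omega
    rw [e1, e2, hR, hch]

/-- If `M : ℕ → ℕ` satisfies, for every `m`,
`Σ_{j=0}^{m} 2^(m−j) · M j = Σ_{j=0}^{m} C(p+1+m, j)`, then `M j = C(p+j, p)` for all
`j`: the sequence `j ↦ C(p+j, p)` is the unique solution of this family of equations. -/
theorem unique_solution_choose (p : ℕ) (M : ℕ → ℕ)
    (hM : ∀ m : ℕ, ∑ j ∈ Finset.range (m + 1), 2 ^ (m - j) * M j =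
      ∑ j ∈ Finset.range (m + 1), Nat.choose (p + 1 + m) j) :
    ∀ j : ℕ, M j = Nat.choose (p + j) p := by
  intro j
  induction j using Nat.strong_induction_on with
  | _ j ih =>
    have h1 := hM j
    have h2 := key_sum p j
    rw [Finset.sum_range_succ] at h1 h2
    have heq : ∑ i ∈ Finset.range j, 2 ^ (j - i) * M i =
        ∑ i ∈ Finset.range j, 2 ^ (j - i) * Nat.choose (p + i) p :=
      Finset.sum_congr rfl fun i hi => by rw [ih i (Finset.mem_range.mp hi)]
    simp only [Nat.sub_self, pow_zero, one_mul] at h1 h2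
    omega
end
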